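/- Let 𝒯 be a monoid of transformations of a nonempty set X, and let 𝒦 be a set of gambles on X that is negation-invariant (−f ∈ 𝒦 whenever f ∈ 𝒦), 𝒯-invariant (f∘T ∈ 𝒦 whenever f ∈ 𝒦, T ∈ 𝒯), and such that f − f∘T ∈ 𝒦 and f∘T − f ∈ 𝒦 for all f ∈ 𝒦, T ∈ 𝒯. Then: (1) a coherent prevision P on 𝒦 satisfies P(f∘T) ≥ P(f) for all f ∈ 𝒦 and T ∈ 𝒯 if and only if P(f − f∘T) ≥ 0 and P(f∘T − f) ≥ 0 for all f ∈ 𝒦 and T ∈ 𝒯 (weak invariance is equivalent to strong invariance for previsions); (2) a coherent lower prevision L on 𝒦 satisfies L(f − f∘T) ≥ 0 and L(f∘T − f) ≥ 0 for all f ∈ 𝒦, T ∈ 𝒯 if and only if every coherent prevision P on all gambles with P(f) ≥ L(f) for all f ∈ 𝒦 satisfies P(f∘T) = P(f) for all f ∈ 𝒦, T ∈ 𝒯. -/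

import Mathlib

def IsGamble {X : Type*} (f : X → ℝ) : Prop :=
  BddAbove (Set.range f) ∧ BddBelow (Set.range f)

def IsCoherentLowerPrevision {X : Type*} (L : (X → ℝ) → ℝ) : Prop :=
  (∀ f : X → ℝ, IsGamble f → sInf (Set.range f) ≤ L f) ∧
  (∀ f g : X → ℝ, IsGamble f → IsGamble g → L f + L g ≤ L (f + g)) ∧
  (∀ f : X → ℝ, IsGamble f → ∀ c : ℝ, 0 ≤ c → L (c • f) = c * L f)

def IsCoherentPrevision {X : Type*} (P : (X → ℝ) → ℝ) : Prop :=
  (∀ f g : X → ℝ, IsGamble f → IsGamble g → P (f + g) = P f + P g) ∧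
  (∀ f : X → ℝ, IsGamble f → sInf (Set.range f) ≤ P f)

def IsTransformationMonoid {X : Type*} (𝒯 : Set (X → X)) : Prop :=
  id ∈ 𝒯 ∧ ∀ S ∈ 𝒯, ∀ T ∈ 𝒯, S ∘ T ∈ 𝒯

def Dominating {X : Type*} (L : (X → ℝ) → ℝ) : Set ((X → ℝ) → ℝ) :=
  {P | IsCoherentPrevision P ∧ ∀ f : X → ℝ, IsGamble f → L f ≤ P f}

def IsCoherentPrevisionOn {X : Type*} (𝒦 : Set (X → ℝ)) (P : (X → ℝ) → ℝ) : Prop :=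
  ∃ Q : (X → ℝ) → ℝ, IsCoherentPrevision Q ∧ ∀ f ∈ 𝒦, P f = Q f

def IsCoherentLowerPrevisionOn {X : Type*} (𝒦 : Set (X → ℝ)) (L : (X → ℝ) → ℝ) : Prop :=
  ∃ M : (X → ℝ) → ℝ, IsCoherentLowerPrevision M ∧ ∀ f ∈ 𝒦, L f = M f

/-! ### Auxiliary lemmas -/

lemma isGamble_iff' {X : Type*} (f : X → ℝ) : IsGamble f ↔ ∃ C, ∀ x, |f x| ≤ C := by
  constructor
  · rintro ⟨⟨a, ha⟩, ⟨b, hb⟩⟩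
    refine ⟨|a| + |b|, fun x => ?_⟩
    have h1 : f x ≤ a := ha ⟨x, rfl⟩
    have h2 : b ≤ f x := hb ⟨x, rfl⟩
    have h3 : a ≤ |a| := le_abs_self a
    have h4 : -|b| ≤ b := neg_abs_le b
    have h5 : (0:ℝ) ≤ |a| := abs_nonneg a
    have h6 : (0:ℝ) ≤ |b| := abs_nonneg b
    rw [abs_le]; constructor <;> linarith
  · rintro ⟨C, hC⟩
    constructor
    · refine ⟨C, ?_⟩; rintro y ⟨x, rfl⟩; exact (abs_le.1 (hC x)).2
    · refine ⟨-C, ?_⟩; rintro y ⟨x, rfl⟩; exact (abs_le.1 (hC x)).1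

lemma isGamble_zero {X : Type*} : IsGamble (0 : X → ℝ) :=
  (isGamble_iff' _).2 ⟨0, fun _ => by simp⟩

lemma IsGamble.add' {X : Type*} {f g : X → ℝ} (hf : IsGamble f) (hg : IsGamble g) :
    IsGamble (f + g) := by
  obtain ⟨C, hC⟩ := (isGamble_iff' f).1 hf
  obtain ⟨D, hD⟩ := (isGamble_iff' g).1 hg
  exact (isGamble_iff' _).2 ⟨C + D, fun x => (abs_add_le _ _).trans (add_le_add (hC x) (hD x))⟩

lemma IsGamble.neg' {X : Type*} {f : X → ℝ} (hf : IsGamble f) : IsGamble (-f) := by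
  obtain ⟨C, hC⟩ := (isGamble_iff' f).1 hf
  exact (isGamble_iff' _).2 ⟨C, fun x => by simpa using hC x⟩

lemma IsGamble.sub' {X : Type*} {f g : X → ℝ} (hf : IsGamble f) (hg : IsGamble g) :
    IsGamble (f - g) := by
  rw [sub_eq_add_neg]; exact hf.add' hg.neg'

lemma IsGamble.smul' {X : Type*} {f : X → ℝ} (hf : IsGamble f) (c : ℝ) : IsGamble (c • f) := by
  obtain ⟨C, hC⟩ := (isGamble_iff' f).1 hf
  refine (isGamble_iff' _).2 ⟨|c| * C, fun x => ?_⟩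
  simp only [Pi.smul_apply, smul_eq_mul, abs_mul]
  have h0 : (0:ℝ) ≤ |c| := abs_nonneg c
  exact mul_le_mul_of_nonneg_left (hC x) h0

lemma IsGamble.comp' {X : Type*} {f : X → ℝ} (hf : IsGamble f) (T : X → X) :
    IsGamble (f ∘ T) := by
  obtain ⟨C, hC⟩ := (isGamble_iff' f).1 hf
  exact (isGamble_iff' _).2 ⟨C, fun x => hC (T x)⟩

lemma prev_zero {X : Type*} {Q : (X → ℝ) → ℝ} (hQ : IsCoherentPrevision Q) : Q 0 = 0 := by
  have := hQ.1 0 0 isGamble_zero isGamble_zero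
  simp at this; linarith

lemma prev_neg {X : Type*} {Q : (X → ℝ) → ℝ} (hQ : IsCoherentPrevision Q) {f : X → ℝ}
    (hf : IsGamble f) : Q (-f) = -Q f := by
  have h := hQ.1 f (-f) hf hf.neg'
  have h2 : f + -f = 0 := by ext x; simp
  rw [h2, prev_zero hQ] at h; linarith

lemma prev_sub {X : Type*} {Q : (X → ℝ) → ℝ} (hQ : IsCoherentPrevision Q) {f g : X → ℝ}
    (hf : IsGamble f) (hg : IsGamble g) : Q (f - g) = Q f - Q g := by
  have h := hQ.1 (f - g) g (hf.sub' hg) hg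
  have h2 : f - g + g = f := by ext x; simp
  rw [h2] at h; linarith

lemma lp_zero {X : Type*} {M : (X → ℝ) → ℝ} (hM : IsCoherentLowerPrevision M) :
    M 0 = 0 := by
  have := hM.2.2 0 isGamble_zero 0 le_rfl
  simpa using this

/-- Submodule of gambles. -/
def gambleSubmodule (X : Type*) : Submodule ℝ (X → ℝ) where
  carrier := {f | IsGamble f}
  add_mem' := fun hf hg => hf.add' hg
  zero_mem' := isGamble_zero
  smul_mem' := fun c _ hf => hf.smul' c

/-- Key extension lemma: a coherent lower prevision is dominated by a coherent prevision
agreeing with it at a given gamble. -/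
lemma exists_dominating_prev {X : Type*} [Nonempty X] {M : (X → ℝ) → ℝ}
    (hM : IsCoherentLowerPrevision M) (g₀ : X → ℝ) (hg₀ : IsGamble g₀) :
    ∃ P : (X → ℝ) → ℝ, IsCoherentPrevision P ∧ (∀ f : X → ℝ, IsGamble f → M f ≤ P f) ∧
      P g₀ = M g₀ := by
  classical
  set V := gambleSubmodule X with hV
  have hmem : ∀ f : X → ℝ, f ∈ V ↔ IsGamble f := fun f => Iff.rfl
  -- sublinear functional p(v) = -M(-v)
  set p : V → ℝ := fun v => -M (-(v : X → ℝ)) with hp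
  have hMadd := hM.2.1
  have hMhom := hM.2.2
  have hM0 : M 0 = 0 := lp_zero hM
  have p_hom : ∀ c : ℝ, 0 < c → ∀ v : V, p (c • v) = c * p v := by
    intro c hc v
    have hg : IsGamble (-(v : X → ℝ)) := (v.2 : IsGamble (v : X → ℝ)).neg'
    have : -((c • v : V) : X → ℝ) = c • (-(v : X → ℝ)) := by ext x; simp; try ring
    simp only [hp, this, hMhom _ hg c hc.le]
    try ring
  have p_add : ∀ v w : V, p (v + w) ≤ p v + p w := by
    intro v w
    have hv : IsGamble (-(v : X → ℝ)) := (v.2 : IsGamble (v : X → ℝ)).neg'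
    have hw : IsGamble (-(w : X → ℝ)) := (w.2 : IsGamble (w : X → ℝ)).neg'
    have h := hMadd _ _ hv hw
    have : -((v + w : V) : X → ℝ) = -(v : X → ℝ) + -(w : X → ℝ) := by ext x; simp; try ring
    simp only [hp, this]; linarith
  have hMneg : ∀ f : X → ℝ, IsGamble f → M f + M (-f) ≤ 0 := by
    intro f hf
    have h := hMadd f (-f) hf hf.neg'
    have h2 : f + -f = 0 := by ext x; simp
    rw [h2, hM0] at h; linarith
  -- the partial linear map
  have key : ∃ g : V →ₗ[ℝ] ℝ, (∀ v : V, g v ≤ p v) ∧ g ⟨g₀, hg₀⟩ = M g₀ := by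
    by_cases h0 : g₀ = 0
    · subst h0
      obtain ⟨g, hg1, hg2⟩ := exists_extension_of_le_sublinear
        (LinearMap.toPMap (0 : V →ₗ[ℝ] ℝ) ⊥) p p_hom p_add
        (by rintro ⟨x, hx⟩
            have hx' : x = 0 := (Submodule.mem_bot ℝ).1 hx
            subst hx'
            simp only [LinearMap.toPMap_apply, LinearMap.zero_apply]
            have : p 0 = 0 := by
              show -M (-((0 : V) : X → ℝ)) = 0
              rw [ZeroMemClass.coe_zero, neg_zero, hM0, neg_zero]
            have h0' : (LinearMap.toPMap (0 : V →ₗ[ℝ] ℝ) ⊥) ⟨0, hx⟩ = 0 := rfl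
            linarith)
      refine ⟨g, hg2, ?_⟩
      have : (⟨(0 : X → ℝ), hg₀⟩ : V) = 0 := rfl
      rw [this, map_zero, hM0]
    · have hg0V : (⟨g₀, hg₀⟩ : V) ≠ 0 := by
        intro h; apply h0; exact congrArg Subtype.val h
      set φ := LinearPMap.mkSpanSingleton (K := ℝ) (L := ℝ) (σ := RingHom.id ℝ) (⟨g₀, hg₀⟩ : V) (M g₀) hg0V with hφ
      have hφdom : ∀ x : φ.domain, ∃ c : ℝ, (x : V) = c • (⟨g₀, hg₀⟩ : V) := by
        rintro ⟨x, hx⟩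
        rw [LinearPMap.domain_mkSpanSingleton, Submodule.mem_span_singleton] at hx
        obtain ⟨c, hc⟩ := hx
        exact ⟨c, hc.symm⟩
      have hφapp : ∀ (c : ℝ) (h), φ ⟨c • (⟨g₀, hg₀⟩ : V), h⟩ = c * M g₀ := by
        intro c h
        exact LinearPMap.mkSpanSingleton'_apply _ _ _ c h
      have hpg₀ : p ⟨g₀, hg₀⟩ = -M (-g₀) := rfl
      have hpng₀ : p (-(⟨g₀, hg₀⟩ : V)) = -M g₀ := by
        simp only [hp]
        congr 1
        congr 1
        ext x; simp
      obtain ⟨g, hg1, hg2⟩ := exists_extension_of_le_sublinear φ p p_hom p_add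
        (by intro x
            obtain ⟨c, hc⟩ := hφdom x
            have hx : x = ⟨c • (⟨g₀, hg₀⟩ : V), by rw [← hc]; exact x.2⟩ := by
              apply Subtype.ext; exact hc
            rw [hx, hφapp c _]
            show c * M g₀ ≤ p (c • (⟨g₀, hg₀⟩ : V))
            rcases le_or_gt 0 c with hc0 | hc0
            · rcases eq_or_lt_of_le hc0 with rfl | hc0'
              · simp [hp, hM0]
              · rw [p_hom c hc0', hpg₀]
                have := hMneg g₀ hg₀
                nlinarith
            · have : c • (⟨g₀, hg₀⟩ : V) = (-c) • (-(⟨g₀, hg₀⟩ : V)) := by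
                rw [smul_neg, neg_smul, neg_neg]
              rw [this, p_hom (-c) (by linarith), hpng₀]
              ring_nf
              linarith [le_refl (c * M g₀)])
      refine ⟨g, hg2, ?_⟩
      have hmem : (⟨g₀, hg₀⟩ : V) ∈ φ.domain := by
        rw [LinearPMap.domain_mkSpanSingleton]
        exact Submodule.mem_span_singleton_self _
      have := hg1 ⟨⟨g₀, hg₀⟩, hmem⟩
      rw [this]
      exact LinearPMap.mkSpanSingleton_apply ℝ ℝ hg0V (M g₀)
  obtain ⟨g, hgle, hgg₀⟩ := key
  -- g v ≥ M v for all gambles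
  have hgeM : ∀ v : V, M (v : X → ℝ) ≤ g v := by
    intro v
    have h := hgle (-v)
    have h2 : g (-v) = -g v := by rw [map_neg]
    have h3 : p (-v) = -M (v : X → ℝ) := by
      simp only [hp]
      have : -((-v : V) : X → ℝ) = (v : X → ℝ) := by simp
      rw [this]
    rw [h2, h3] at h; linarith
  set P : (X → ℝ) → ℝ := fun f => if h : IsGamble f then g ⟨f, h⟩ else 0 with hP
  refine ⟨P, ⟨?_, ?_⟩, ?_, ?_⟩
  · intro f h hf hh
    simp only [hP, dif_pos hf, dif_pos hh, dif_pos (hf.add' hh)]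
    have : (⟨f + h, hf.add' hh⟩ : V) = ⟨f, hf⟩ + ⟨h, hh⟩ := rfl
    rw [this, map_add]
  · intro f hf
    simp only [hP, dif_pos hf]
    calc sInf (Set.range f) ≤ M f := hM.1 f hf
      _ ≤ g ⟨f, hf⟩ := hgeM ⟨f, hf⟩
  · intro f hf
    simp only [hP, dif_pos hf]
    exact hgeM ⟨f, hf⟩
  · simp only [hP, dif_pos hg₀]
    exact hgg₀

theorem stmt7 (X : Type*) [Nonempty X] (𝒯 : Set (X → X))
    (h𝒯 : IsTransformationMonoid 𝒯)
    (𝒦 : Set (X → ℝ)) (h𝒦g : ∀ f ∈ 𝒦, IsGamble f)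
    (h𝒦neg : ∀ f ∈ 𝒦, -f ∈ 𝒦)
    (h𝒦T : ∀ f ∈ 𝒦, ∀ T ∈ 𝒯, f ∘ T ∈ 𝒦)
    (h𝒦diff : ∀ f ∈ 𝒦, ∀ T ∈ 𝒯, (f - f ∘ T) ∈ 𝒦 ∧ (f ∘ T - f) ∈ 𝒦) :
    (∀ P : (X → ℝ) → ℝ, IsCoherentPrevisionOn 𝒦 P →
      ((∀ f ∈ 𝒦, ∀ T ∈ 𝒯, P f ≤ P (f ∘ T)) ↔
        (∀ f ∈ 𝒦, ∀ T ∈ 𝒯, 0 ≤ P (f - f ∘ T) ∧ 0 ≤ P (f ∘ T - f)))) ∧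
    (∀ L : (X → ℝ) → ℝ, IsCoherentLowerPrevisionOn 𝒦 L →
      ((∀ f ∈ 𝒦, ∀ T ∈ 𝒯, 0 ≤ L (f - f ∘ T) ∧ 0 ≤ L (f ∘ T - f)) ↔
        (∀ P : (X → ℝ) → ℝ, IsCoherentPrevision P → (∀ f ∈ 𝒦, L f ≤ P f) →
          ∀ f ∈ 𝒦, ∀ T ∈ 𝒯, P (f ∘ T) = P f))) := by
  constructor
  · -- Part 1
    rintro P ⟨Q, hQ, hPQ⟩
    constructor
    · intro hweak f hf T hT
      have hfg := h𝒦g f hf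
      have hfT : f ∘ T ∈ 𝒦 := h𝒦T f hf T hT
      have hfTg := h𝒦g _ hfT
      obtain ⟨h1, h2⟩ := h𝒦diff f hf T hT
      -- from weak invariance applied to f and -f
      have hw1 : P f ≤ P (f ∘ T) := hweak f hf T hT
      have hw2 : P (-f) ≤ P ((-f) ∘ T) := hweak (-f) (h𝒦neg f hf) T hT
      have hnegT : (-f) ∘ T = -(f ∘ T) := rfl
      rw [hnegT] at hw2
      have hnfT : -(f ∘ T) ∈ 𝒦 := h𝒦neg _ hfT
      rw [hPQ _ hf, hPQ _ hfT] at hw1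
      rw [hPQ _ (h𝒦neg f hf), hPQ _ hnfT, prev_neg hQ hfg, prev_neg hQ hfTg] at hw2
      constructor
      · rw [hPQ _ h1, prev_sub hQ hfg hfTg]; linarith
      · rw [hPQ _ h2, prev_sub hQ hfTg hfg]; linarith
    · intro hstrong f hf T hT
      have hfg := h𝒦g f hf
      have hfT : f ∘ T ∈ 𝒦 := h𝒦T f hf T hT
      have hfTg := h𝒦g _ hfT
      obtain ⟨h1, h2⟩ := h𝒦diff f hf T hT
      have hs := (hstrong f hf T hT).2
      rw [hPQ _ h2, prev_sub hQ hfTg hfg] at hs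
      rw [hPQ _ hf, hPQ _ hfT]; linarith
  · -- Part 2
    rintro L ⟨M, hM, hLM⟩
    constructor
    · intro hstrong P hP hdom f hf T hT
      have hfg := h𝒦g f hf
      have hfT : f ∘ T ∈ 𝒦 := h𝒦T f hf T hT
      have hfTg := h𝒦g _ hfT
      obtain ⟨h1, h2⟩ := h𝒦diff f hf T hT
      obtain ⟨hs1, hs2⟩ := hstrong f hf T hT
      have hd1 : (0:ℝ) ≤ P (f - f ∘ T) := le_trans hs1 (hdom _ h1)
      have hd2 : (0:ℝ) ≤ P (f ∘ T - f) := le_trans hs2 (hdom _ h2)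
      rw [prev_sub hP hfg hfTg] at hd1
      rw [prev_sub hP hfTg hfg] at hd2
      linarith
    · intro henv f hf T hT
      have hfg := h𝒦g f hf
      have hfT : f ∘ T ∈ 𝒦 := h𝒦T f hf T hT
      have hfTg := h𝒦g _ hfT
      obtain ⟨h1, h2⟩ := h𝒦diff f hf T hT
      constructor
      · obtain ⟨P, hP, hPM, hPg⟩ := exists_dominating_prev hM (f - f ∘ T) (hfg.sub' hfTg)
        have hdom : ∀ g ∈ 𝒦, L g ≤ P g := fun g hg => by
          rw [hLM g hg]; exact hPM g (h𝒦g g hg)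
        have heq := henv P hP hdom f hf T hT
        have := prev_sub hP hfg hfTg
        rw [hLM _ h1, ← hPg, this, heq]
        linarith [le_refl (P f)]
      · obtain ⟨P, hP, hPM, hPg⟩ := exists_dominating_prev hM (f ∘ T - f) (hfTg.sub' hfg)
        have hdom : ∀ g ∈ 𝒦, L g ≤ P g := fun g hg => by
          rw [hLM g hg]; exact hPM g (h𝒦g g hg)
        have heq := henv P hP hdom f hf T hT
        have := prev_sub hP hfTg hfg
        rw [hLM _ h2, ← hPg, this, heq]
        linarith [le_refl (P f)]
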